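/- Let (Y, d) be a metric space, let T : Y → Y be Lipschitz with constant β ∈ (0,1), and let Π : Y → Y be Lipschitz with constant 1. Suppose η^π ∈ Y satisfies T(η^π) = η^π and η⋆ ∈ Y satisfies Π(T(η⋆)) = η⋆, and let ε := d(Π(η^π), η^π). Then for every η ∈ Y: d(η, η^π)² ≤ 2·d(η, η⋆)² + 2·(ε/(1 − β))². -/
import Mathlib

/-- **Representation-error decomposition.** If `T` is a `β`-contraction with fixed
point `η^π`, `Π` is nonexpansive, `η⋆` is the fixed point of `Π ∘ T`, and
`ε := d(Π η^π, η^π)`, then for every `η`,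
`d(η, η^π)² ≤ 2 d(η, η⋆)² + 2 (ε/(1 − β))²`. -/
theorem representation_error_decomposition {Y : Type*} [MetricSpace Y]
    (T Proj : Y → Y) (β : ℝ) (hβ : β ∈ Set.Ioo (0 : ℝ) 1)
    (hT : ∀ x y : Y, dist (T x) (T y) ≤ β * dist x y)
    (hProj : ∀ x y : Y, dist (Proj x) (Proj y) ≤ dist x y)
    (ηπ ηstar : Y) (hηπ : T ηπ = ηπ) (hηstar : Proj (T ηstar) = ηstar) :
    ∀ η : Y,
      dist η ηπ ^ 2
        ≤ 2 * dist η ηstar ^ 2 + 2 * (dist (Proj ηπ) ηπ / (1 - β)) ^ 2 := by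
  intro η
  obtain ⟨hβ0, hβ1⟩ := hβ
  set ε := dist (Proj ηπ) ηπ with hε
  have h1β : (0:ℝ) < 1 - β := by linarith
  -- key bound: dist ηstar ηπ ≤ ε / (1 - β)
  have key : dist ηstar ηπ ≤ ε / (1 - β) := by
    have h1 : dist ηstar ηπ ≤ β * dist ηstar ηπ + ε := by
      calc dist ηstar ηπ = dist (Proj (T ηstar)) ηπ := by rw [hηstar]
        _ ≤ dist (Proj (T ηstar)) (Proj (T ηπ)) + dist (Proj (T ηπ)) ηπ :=
            dist_triangle _ _ _
        _ ≤ dist (T ηstar) (T ηπ) + dist (Proj (T ηπ)) ηπ := by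
            gcongr; exact hProj _ _
        _ ≤ β * dist ηstar ηπ + ε := by
            have h2 : Proj (T ηπ) = Proj ηπ := by rw [hηπ]
            have := hT ηstar ηπ
            rw [h2]
            linarith
    rw [le_div_iff₀ h1β]
    linarith
  have tri : dist η ηπ ≤ dist η ηstar + ε / (1 - β) := by
    calc dist η ηπ ≤ dist η ηstar + dist ηstar ηπ := dist_triangle _ _ _
      _ ≤ dist η ηstar + ε / (1 - β) := by linarith
  have hd : (0:ℝ) ≤ dist η ηπ := dist_nonneg
  nlinarith [sq_nonneg (dist η ηstar - ε / (1 - β)), sq_nonneg (dist η ηstar + ε / (1 - β))]
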